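/- Let n ≥ 1, λ > 0, p > 1 and p' = p/(p-1). Let φ_λ be the Yordanov–Zhang eigenfunction on ℝⁿ. Then there exists C = C(n,p,λ) > 0 such that for every ρ ≥ 1, ∫_{B_ρ} φ_λ(x)^{p'} dx ≤ C ρ^{n-1-(n-1)p'/2} e^{p'λρ}. -/

import Mathlib

open MeasureTheory Metric Set
open scoped Pointwise ENNReal

set_option maxHeartbeats 1000000 in
lemma cap_small (n : ℕ) (hn : 1 ≤ n) (v : EuclideanSpace ℝ (Fin n)) (hv : ‖v‖ = 1)
    (s : ℝ) (hs : 0 < s) (hs1 : s ≤ 1) :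
    (volume : Measure (EuclideanSpace ℝ (Fin n))).toSphere
      {ω : sphere (0 : EuclideanSpace ℝ (Fin n)) 1 | 1 - s ≤ inner ℝ v (ω : EuclideanSpace ℝ (Fin n))}
    ≤ ENNReal.ofReal ((n : ℝ) * 2 * 2 ^ (n-1) * 2 ^ (((n:ℝ)-1)/2) * s ^ (((n:ℝ)-1)/2)) := by
  classical
  set A : Set (sphere (0 : EuclideanSpace ℝ (Fin n)) 1) :=
    {ω | 1 - s ≤ inner ℝ v (ω : EuclideanSpace ℝ (Fin n))} with hA
  have hAmeas : MeasurableSet A := by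
    have : Continuous fun ω : sphere (0 : EuclideanSpace ℝ (Fin n)) 1 =>
        (inner ℝ v (ω : EuclideanSpace ℝ (Fin n)) : ℝ) :=
      Continuous.inner continuous_const continuous_subtype_val
    exact (isClosed_le continuous_const this).measurableSet
  have i0 : Fin n := ⟨0, hn⟩
  set e₀ : EuclideanSpace ℝ (Fin n) := EuclideanSpace.single i0 1 with he₀def
  have he₀ : ‖e₀‖ = 1 := by simp [he₀def, EuclideanSpace.norm_single]
  set T : EuclideanSpace ℝ (Fin n) ≃ₗᵢ[ℝ] EuclideanSpace ℝ (Fin n) :=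
    Submodule.reflection (ℝ ∙ (v - e₀))ᗮ with hTdef
  have hTv : T v = e₀ := Submodule.reflection_sub (by rw [hv, he₀])
  set B : Fin n → ℝ := fun i => if i = i0 then 1 else Real.sqrt (2*s) with hB
  have hincl : (Ioo (0:ℝ) 1 • ((↑) '' A) : Set (EuclideanSpace ℝ (Fin n))) ⊆
      (fun y => (MeasurableEquiv.toLp 2 (Fin n → ℝ)).symm (T y)) ⁻¹'
        (Set.univ.pi fun i => Icc (-(B i)) (B i)) := by
    rintro y hy
    rw [Set.mem_smul] at hy
    obtain ⟨c, hc, w, hw, rfl⟩ := hy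
    obtain ⟨ω, hω, rfl⟩ := hw
    obtain ⟨hc0, hc1⟩ := hc
    have hwn : ‖(ω : EuclideanSpace ℝ (Fin n))‖ = 1 := by
      have := ω.2; rwa [mem_sphere_zero_iff_norm] at this
    have hvw : (1:ℝ) - s ≤ inner ℝ v (ω : EuclideanSpace ℝ (Fin n)) := hω
    have hvw1 : |(inner ℝ v (ω : EuclideanSpace ℝ (Fin n)) : ℝ)| ≤ 1 := by
      calc |(inner ℝ v (ω : EuclideanSpace ℝ (Fin n)) : ℝ)| ≤ ‖v‖ * ‖(ω : EuclideanSpace ℝ (Fin n))‖ :=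
            abs_real_inner_le_norm _ _
        _ = 1 := by rw [hv, hwn, mul_one]
    set z := T (c • (ω : EuclideanSpace ℝ (Fin n))) with hz
    have hz0 : z i0 = c * inner ℝ v (ω : EuclideanSpace ℝ (Fin n)) := by
      have h1 : (inner ℝ e₀ z : ℝ) = z i0 := by
        rw [he₀def, EuclideanSpace.inner_single_left]; simp
      have h2 : (inner ℝ e₀ z : ℝ) = inner ℝ v (c • (ω : EuclideanSpace ℝ (Fin n))) := by
        rw [hz, ← hTv, LinearIsometryEquiv.inner_map_map]
      rw [← h1, h2, real_inner_smul_right]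
    have hnz : ‖z‖ = c := by
      rw [hz, T.norm_map, norm_smul, hwn, mul_one, Real.norm_eq_abs, abs_of_pos hc0]
    have hsum : ∑ j, z j * z j = c^2 := by
      have h3 : (inner ℝ z z : ℝ) = ∑ j, z j * z j := by
        rw [PiLp.inner_apply]; rfl
      rw [← h3, real_inner_self_eq_norm_sq, hnz]
    intro i _
    have hzi : (MeasurableEquiv.toLp 2 (Fin n → ℝ)).symm (T (c • (ω : EuclideanSpace ℝ (Fin n)))) i
        = z i := rfl
    simp only [Set.mem_Icc, hzi]
    rw [← abs_le]
    have habs := abs_le.1 hvw1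
    by_cases hi : i = i0
    · rw [hi]
      simp only [hB, if_pos rfl]
      rw [hz0, abs_mul, abs_of_pos hc0]
      exact mul_le_one₀ hc1.le (abs_nonneg _) hvw1
    · simp only [hB, if_neg hi]
      have hpair : z i * z i + z i0 * z i0 ≤ ∑ j, z j * z j := by
        calc z i * z i + z i0 * z i0 = ∑ j ∈ ({i, i0} : Finset (Fin n)), z j * z j := by
              rw [Finset.sum_insert (by simp [hi]), Finset.sum_singleton]
          _ ≤ ∑ j, z j * z j := Finset.sum_le_sum_of_subset_of_nonneg (Finset.subset_univ _)
              (fun j _ _ => mul_self_nonneg _)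
      have hzi2 : z i * z i ≤ 2*s := by
        have h1 : z i * z i ≤ c^2 - z i0 * z i0 := by
          rw [← hsum]; linarith [hpair]
        have h1s : (0:ℝ) ≤ 1 - s := by linarith
        have ht2 : (1-s)^2 ≤ (inner ℝ v (ω : EuclideanSpace ℝ (Fin n)) : ℝ)^2 :=
          pow_le_pow_left₀ h1s hvw 2
        have hinner2 : (inner ℝ v (ω : EuclideanSpace ℝ (Fin n)) : ℝ)^2 ≤ 1 := by nlinarith
        have hkey : (0:ℝ) ≤ (1 - c^2) * (1 - (inner ℝ v (ω : EuclideanSpace ℝ (Fin n)) : ℝ)^2) :=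
          mul_nonneg (by nlinarith) (by nlinarith)
        have h2 : c^2 - z i0 * z i0 ≤ 1 - (1-s)^2 := by rw [hz0]; nlinarith
        nlinarith
      rw [← Real.sqrt_sq_eq_abs]
      apply Real.sqrt_le_sqrt
      nlinarith [hzi2]
  -- measure computation
  have hmp : MeasurePreserving (fun y => (MeasurableEquiv.toLp 2 (Fin n → ℝ)).symm (T y))
      volume volume :=
    (EuclideanSpace.volume_preserving_symm_measurableEquiv_toLp (Fin n)).comp T.measurePreserving
  have hboxmeas : MeasurableSet (Set.univ.pi fun i => Icc (-(B i)) (B i)) :=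
    MeasurableSet.univ_pi fun i => measurableSet_Icc
  have hvolpre : volume ((fun y => (MeasurableEquiv.toLp 2 (Fin n → ℝ)).symm (T y)) ⁻¹'
      (Set.univ.pi fun i => Icc (-(B i)) (B i))) = ∏ i, ENNReal.ofReal (2 * B i) := by
    rw [hmp.measure_preimage hboxmeas.nullMeasurableSet, volume_pi_pi]
    congr 1; funext i; rw [Real.volume_Icc]; ring_nf
  have hprod : (∏ i, ENNReal.ofReal (2 * B i)) =
      ENNReal.ofReal 2 * ENNReal.ofReal (2 * Real.sqrt (2*s)) ^ (n-1) := by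
    rw [← Finset.mul_prod_erase Finset.univ _ (Finset.mem_univ i0)]
    congr 1
    · rw [hB]; simp
    · rw [Finset.prod_congr rfl (fun i hi => ?_), Finset.prod_const,
        Finset.card_erase_of_mem (Finset.mem_univ _), Finset.card_univ, Fintype.card_fin]
      rw [hB]; simp only
      rw [if_neg (Finset.mem_erase.1 hi).1]
  have hle : Measure.toSphere volume A ≤ (Module.finrank ℝ (EuclideanSpace ℝ (Fin n))) *
      (ENNReal.ofReal 2 * ENNReal.ofReal (2 * Real.sqrt (2*s)) ^ (n-1)) := by
    rw [Measure.toSphere_apply' _ hAmeas, ← hprod, ← hvolpre]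
    exact mul_le_mul_right (measure_mono hincl) _
  refine hle.trans ?_
  rw [finrank_euclideanSpace_fin]
  -- turn everything into one ofReal
  have hsq : (0:ℝ) ≤ 2 * Real.sqrt (2*s) := by positivity
  rw [← ENNReal.ofReal_pow hsq, ← ENNReal.ofReal_mul (by norm_num), ← ENNReal.ofReal_natCast n,
    ← ENNReal.ofReal_mul (by positivity)]
  apply ENNReal.ofReal_le_ofReal
  have hsqrt : Real.sqrt (2*s) ^ (n-1) = 2 ^ (((n:ℝ)-1)/2) * s ^ (((n:ℝ)-1)/2) := by
    have h2s : (0:ℝ) ≤ 2*s := by positivity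
    rw [← Real.rpow_natCast (Real.sqrt (2*s)) (n-1), Real.rpow_def_of_pos (by positivity)]
    rw [Real.log_sqrt h2s]
    rw [← Real.mul_rpow (by norm_num) hs.le, Real.rpow_def_of_pos (by positivity)]
    congr 1
    rw [Nat.cast_sub hn]
    ring
  rw [mul_pow, hsqrt]
  ring_nf
  apply le_of_eq
  ring

lemma cap_bound (n : ℕ) (hn : 1 ≤ n) : ∃ C : ℝ, 0 < C ∧
    ∀ (v : EuclideanSpace ℝ (Fin n)), ‖v‖ = 1 → ∀ (s : ℝ), 0 < s →
    (volume : Measure (EuclideanSpace ℝ (Fin n))).toSphere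
      {ω : sphere (0 : EuclideanSpace ℝ (Fin n)) 1 | 1 - s ≤ inner ℝ v (ω : EuclideanSpace ℝ (Fin n))}
    ≤ ENNReal.ofReal (C * s ^ (((n:ℝ)-1)/2)) := by
  set μS := (volume : Measure (EuclideanSpace ℝ (Fin n))).toSphere with hμS
  set γ : ℝ := ((n:ℝ)-1)/2 with hγdef
  have hγ : 0 ≤ γ := by
    rw [hγdef]
    have : (1:ℝ) ≤ n := by exact_mod_cast hn
    linarith
  set C₁ : ℝ := (n : ℝ) * 2 * 2 ^ (n-1) * 2 ^ γ with hC₁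
  have hC₁pos : 0 < C₁ := by
    rw [hC₁]
    have hn' : (0:ℝ) < n := by exact_mod_cast hn
    positivity
  set m : ℝ := (μS univ).toReal with hm
  have hmnonneg : 0 ≤ m := ENNReal.toReal_nonneg
  refine ⟨C₁ + m, by linarith, ?_⟩
  intro v hv s hs
  rcases le_or_gt s 1 with hs1 | hs1
  · refine (cap_small n hn v hv s hs hs1).trans (ENNReal.ofReal_le_ofReal ?_)
    have : (0:ℝ) ≤ s ^ γ := Real.rpow_nonneg hs.le γ
    nlinarith
  · have hfin : μS univ ≠ ⊤ := measure_ne_top _ _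
    calc μS _ ≤ μS univ := measure_mono (subset_univ _)
      _ = ENNReal.ofReal m := by rw [hm, ENNReal.ofReal_toReal hfin]
      _ ≤ ENNReal.ofReal ((C₁ + m) * s ^ γ) := by
          apply ENNReal.ofReal_le_ofReal
          have h1 : (1:ℝ) ≤ s ^ γ := Real.one_le_rpow hs1.le hγ
          nlinarith

lemma yz_summable (γ : ℝ) (hγ : 0 ≤ γ) (N : ℕ) (hγN : γ ≤ N) :
    Summable (fun k : ℕ => Real.exp (-(k:ℝ)) * ((k:ℝ)+1) ^ γ) := by
  have hr : ‖Real.exp (-1)‖ < 1 := by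
    rw [Real.norm_eq_abs, abs_of_pos (Real.exp_pos _)]
    exact Real.exp_lt_one_iff.2 (by norm_num)
  have hg : Summable (fun j : ℕ => (j:ℝ)^N * (Real.exp (-1))^j) :=
    summable_pow_mul_geometric_of_norm_lt_one N hr
  have hg1 : Summable (fun k : ℕ => ((k:ℝ)+1)^N * (Real.exp (-1))^(k+1)) := by
    have := (summable_nat_add_iff 1).2 hg
    simpa using this
  have hg2 : Summable (fun k : ℕ => Real.exp 1 * (((k:ℝ)+1)^N * (Real.exp (-1))^(k+1))) :=
    hg1.mul_left _
  apply Summable.of_nonneg_of_le (fun k => by positivity) (fun k => ?_) hg2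
  have h1 : ((k:ℝ)+1) ^ γ ≤ ((k:ℝ)+1) ^ (N:ℝ) :=
    Real.rpow_le_rpow_of_exponent_le (by exact_mod_cast Nat.le_add_left 1 k) hγN
  have h2 : ((k:ℝ)+1) ^ (N:ℝ) = ((k:ℝ)+1) ^ N := Real.rpow_natCast _ N
  have h3 : (Real.exp (-1))^(k+1) = Real.exp (-((k:ℝ)+1)) := by
    rw [← Real.exp_nat_mul]
    push_cast
    ring_nf
  have h4 : Real.exp 1 * Real.exp (-((k:ℝ)+1)) = Real.exp (-(k:ℝ)) := by
    rw [← Real.exp_add]; ring_nf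
  calc Real.exp (-(k:ℝ)) * ((k:ℝ)+1) ^ γ ≤ Real.exp (-(k:ℝ)) * ((k:ℝ)+1) ^ N := by
        rw [← h2] at *
        exact mul_le_mul_of_nonneg_left h1 (Real.exp_pos _).le
    _ = Real.exp 1 * (((k:ℝ)+1)^N * (Real.exp (-1))^(k+1)) := by
        rw [h3, ← h4]; ring

set_option maxHeartbeats 1000000 in
lemma pointwise_bound (n : ℕ) (hn : 1 ≤ n) (lam : ℝ) (hlam : 0 < lam) :
    ∃ K : ℝ, 0 < K ∧ ∀ x : EuclideanSpace ℝ (Fin n),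
      (∫ ω : sphere (0 : EuclideanSpace ℝ (Fin n)) 1,
          Real.exp (lam * inner ℝ x (ω : EuclideanSpace ℝ (Fin n)))
        ∂((volume : Measure (EuclideanSpace ℝ (Fin n))).toSphere))
      ≤ K * (1 + ‖x‖) ^ (-(((n:ℝ)-1)/2)) * Real.exp (lam * ‖x‖) := by
  classical
  set μS := (volume : Measure (EuclideanSpace ℝ (Fin n))).toSphere with hμS
  set γ : ℝ := ((n:ℝ)-1)/2 with hγdef
  have hγ : 0 ≤ γ := by
    rw [hγdef]; have : (1:ℝ) ≤ n := by exact_mod_cast hn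
    linarith
  have hγn : γ ≤ (n:ℕ) := by
    rw [hγdef]; push_cast; linarith [Nat.cast_nonneg (α := ℝ) n]
  obtain ⟨C, hC, hcap⟩ := cap_bound n hn
  have hS : Summable (fun k : ℕ => Real.exp (-(k:ℝ)) * ((k:ℝ)+1) ^ γ) := yz_summable γ hγ n hγn
  set S : ℝ := ∑' k : ℕ, Real.exp (-(k:ℝ)) * ((k:ℝ)+1) ^ γ with hSdef
  have hSnonneg : 0 ≤ S := tsum_nonneg (fun k => by positivity)
  have hSpos : 0 < S := by
    have h0 : (1:ℝ) ≤ S := by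
      have := hS.le_tsum 0 (fun k _ => by positivity)
      simpa using this
    linarith
  set m : ℝ := (μS univ).toReal with hm
  have hmnonneg : 0 ≤ m := ENNReal.toReal_nonneg
  have hcont : ∀ x : EuclideanSpace ℝ (Fin n), Continuous fun ω : sphere (0 : EuclideanSpace ℝ (Fin n)) 1 =>
      Real.exp (lam * inner ℝ x (ω : EuclideanSpace ℝ (Fin n))) := fun x =>
    Real.continuous_exp.comp (continuous_const.mul
      (Continuous.inner continuous_const continuous_subtype_val))
  have hfnonneg : ∀ (x : EuclideanSpace ℝ (Fin n)) (ω : sphere (0 : EuclideanSpace ℝ (Fin n)) 1),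
      (0:ℝ) ≤ Real.exp (lam * inner ℝ x (ω : EuclideanSpace ℝ (Fin n))) := fun x ω => (Real.exp_pos _).le
  have hfle : ∀ (x : EuclideanSpace ℝ (Fin n)) (ω : sphere (0 : EuclideanSpace ℝ (Fin n)) 1),
      Real.exp (lam * inner ℝ x (ω : EuclideanSpace ℝ (Fin n))) ≤ Real.exp (lam * ‖x‖) := by
    intro x ω
    apply Real.exp_le_exp.2
    apply mul_le_mul_of_nonneg_left _ hlam.le
    have hωn : ‖(ω : EuclideanSpace ℝ (Fin n))‖ = 1 := by
      have := ω.2; rwa [mem_sphere_zero_iff_norm] at this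
    calc (inner ℝ x (ω : EuclideanSpace ℝ (Fin n)) : ℝ) ≤ ‖x‖ * ‖(ω : EuclideanSpace ℝ (Fin n))‖ :=
          real_inner_le_norm _ _
      _ = ‖x‖ := by rw [hωn, mul_one]
  -- crude bound
  have hcrude : ∀ x : EuclideanSpace ℝ (Fin n),
      (∫ ω : sphere (0 : EuclideanSpace ℝ (Fin n)) 1,
        Real.exp (lam * inner ℝ x (ω : EuclideanSpace ℝ (Fin n))) ∂μS) ≤ m * Real.exp (lam * ‖x‖) := by
    intro x
    have h := integral_mono_of_nonneg (μ := μS)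
      (f := fun ω : sphere (0 : EuclideanSpace ℝ (Fin n)) 1 =>
        Real.exp (lam * inner ℝ x (ω : EuclideanSpace ℝ (Fin n))))
      (g := fun _ => Real.exp (lam * ‖x‖))
      (ae_of_all _ (hfnonneg x)) (integrable_const _) (ae_of_all _ (hfle x))
    rwa [integral_const, smul_eq_mul] at h
  -- sharp bound
  have hsharp : ∀ x : EuclideanSpace ℝ (Fin n), x ≠ 0 →
      (∫ ω : sphere (0 : EuclideanSpace ℝ (Fin n)) 1,
        Real.exp (lam * inner ℝ x (ω : EuclideanSpace ℝ (Fin n))) ∂μS)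
      ≤ C * S * (lam * ‖x‖) ^ (-γ) * Real.exp (lam * ‖x‖) := by
    intro x hx
    have hr : 0 < ‖x‖ := norm_pos_iff.2 hx
    set r : ℝ := ‖x‖ with hrdef
    set c : ℝ := lam * r with hcdef
    have hc : 0 < c := mul_pos hlam hr
    set v : EuclideanSpace ℝ (Fin n) := r⁻¹ • x with hvdef
    have hv : ‖v‖ = 1 := by
      rw [hvdef, norm_smul, Real.norm_eq_abs, abs_of_pos (inv_pos.2 hr), ← hrdef,
        inv_mul_cancel₀ hr.ne']
    have hinner : ∀ ω : sphere (0 : EuclideanSpace ℝ (Fin n)) 1,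
        (inner ℝ v (ω : EuclideanSpace ℝ (Fin n)) : ℝ) = r⁻¹ * inner ℝ x (ω : EuclideanSpace ℝ (Fin n)) := by
      intro ω; rw [hvdef, real_inner_smul_left]
    set A : ℕ → Set (sphere (0 : EuclideanSpace ℝ (Fin n)) 1) := fun k =>
      (fun ω : sphere (0 : EuclideanSpace ℝ (Fin n)) 1 =>
        lam * (inner ℝ x (ω : EuclideanSpace ℝ (Fin n)) : ℝ)) ⁻¹' (Ioc (c-(k+1)) (c-k)) with hAdef
    have hu : Continuous fun ω : sphere (0 : EuclideanSpace ℝ (Fin n)) 1 =>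
        lam * (inner ℝ x (ω : EuclideanSpace ℝ (Fin n)) : ℝ) :=
      continuous_const.mul (Continuous.inner continuous_const continuous_subtype_val)
    have hAmeas : ∀ k, MeasurableSet (A k) := fun k => hu.measurable measurableSet_Ioc
    have hinle : ∀ ω : sphere (0 : EuclideanSpace ℝ (Fin n)) 1,
        (inner ℝ x (ω : EuclideanSpace ℝ (Fin n)) : ℝ) ≤ r := by
      intro ω
      have hωn : ‖(ω : EuclideanSpace ℝ (Fin n))‖ = 1 := by
        have := ω.2; rwa [mem_sphere_zero_iff_norm] at this
      calc (inner ℝ x (ω : EuclideanSpace ℝ (Fin n)) : ℝ) ≤ ‖x‖ * ‖(ω : EuclideanSpace ℝ (Fin n))‖ :=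
            real_inner_le_norm _ _
        _ = r := by rw [hωn, mul_one]
    have hule : ∀ ω : sphere (0 : EuclideanSpace ℝ (Fin n)) 1,
        lam * (inner ℝ x (ω : EuclideanSpace ℝ (Fin n)) : ℝ) ≤ c :=
      fun ω => mul_le_mul_of_nonneg_left (hinle ω) hlam.le
    have hcover : (univ : Set (sphere (0 : EuclideanSpace ℝ (Fin n)) 1)) ⊆ ⋃ k, A k := by
      intro ω _
      set u : ℝ := lam * (inner ℝ x (ω : EuclideanSpace ℝ (Fin n)) : ℝ) with hudef
      have hu_le : u ≤ c := hule ω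
      refine mem_iUnion.2 ⟨⌊c - u⌋₊, ?_⟩
      have h1 : (⌊c - u⌋₊ : ℝ) ≤ c - u := Nat.floor_le (by linarith)
      have h2 : c - u < ⌊c - u⌋₊ + 1 := Nat.lt_floor_add_one _
      simp only [hAdef, Set.mem_preimage, Set.mem_Ioc]
      constructor <;> [linarith; linarith]
    have hsub : ∀ k : ℕ, A k ⊆
        {ω : sphere (0 : EuclideanSpace ℝ (Fin n)) 1 |
          1 - ((k:ℝ)+1)/c ≤ inner ℝ v (ω : EuclideanSpace ℝ (Fin n))} := by
      intro k ω hω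
      simp only [hAdef, Set.mem_preimage, Set.mem_Ioc] at hω
      have h1 : c - ((k:ℝ)+1) < lam * (inner ℝ x (ω : EuclideanSpace ℝ (Fin n)) : ℝ) := hω.1
      have h2 : (inner ℝ v (ω : EuclideanSpace ℝ (Fin n)) : ℝ)
          = r⁻¹ * inner ℝ x (ω : EuclideanSpace ℝ (Fin n)) := hinner ω
      show 1 - ((k:ℝ)+1)/c ≤ inner ℝ v (ω : EuclideanSpace ℝ (Fin n))
      rw [h2]
      have hrr : r⁻¹ * (inner ℝ x (ω : EuclideanSpace ℝ (Fin n)) : ℝ)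
          = (lam * inner ℝ x (ω : EuclideanSpace ℝ (Fin n))) / c := by
        rw [hcdef]
        field_simp
      have hlhs : 1 - ((k:ℝ)+1)/c = (c - ((k:ℝ)+1))/c := by field_simp
      rw [hrr, hlhs]
      exact (div_le_div_iff_of_pos_right hc).mpr h1.le
    -- lintegral estimate
    have hterm : ∀ k : ℕ, (∫⁻ ω in A k,
          ENNReal.ofReal (Real.exp (lam * inner ℝ x (ω : EuclideanSpace ℝ (Fin n)))) ∂μS)
        ≤ ENNReal.ofReal (Real.exp (c - k)) * ENNReal.ofReal (C * (((k:ℝ)+1)/c) ^ γ) := by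
      intro k
      have step1 : (∫⁻ ω in A k,
            ENNReal.ofReal (Real.exp (lam * inner ℝ x (ω : EuclideanSpace ℝ (Fin n)))) ∂μS)
          ≤ ENNReal.ofReal (Real.exp (c - k)) * μS (A k) := by
        have := setLIntegral_mono' (μ := μS) (s := A k)
          (g := fun _ => ENNReal.ofReal (Real.exp (c - k))) (hAmeas k) (fun ω hω => by
            apply ENNReal.ofReal_le_ofReal
            apply Real.exp_le_exp.2
            simp only [hAdef, Set.mem_preimage, Set.mem_Ioc] at hω
            exact hω.2)
        simpa [setLIntegral_const] using this
      refine step1.trans ?_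
      apply mul_le_mul_right
      calc μS (A k) ≤ μS {ω : sphere (0 : EuclideanSpace ℝ (Fin n)) 1 |
            1 - ((k:ℝ)+1)/c ≤ inner ℝ v (ω : EuclideanSpace ℝ (Fin n))} := measure_mono (hsub k)
        _ ≤ ENNReal.ofReal (C * (((k:ℝ)+1)/c) ^ ((( n:ℝ)-1)/2)) :=
            hcap v hv _ (by positivity)
        _ = ENNReal.ofReal (C * (((k:ℝ)+1)/c) ^ γ) := by rw [← hγdef]
    have haeq : ∀ k : ℕ, Real.exp (c - k) * (C * (((k:ℝ)+1)/c) ^ γ)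
        = (C * Real.exp c * c ^ (-γ)) * (Real.exp (-(k:ℝ)) * ((k:ℝ)+1) ^ γ) := by
      intro k
      have h1 : Real.exp (c - k) = Real.exp c * Real.exp (-(k:ℝ)) := by
        rw [← Real.exp_add]; ring_nf
      have h2 : (((k:ℝ)+1)/c) ^ γ = ((k:ℝ)+1) ^ γ * c ^ (-γ) := by
        rw [Real.div_rpow (by positivity) hc.le, Real.rpow_neg hc.le, div_eq_mul_inv]
      rw [h1, h2]; ring
    have hkey : (∫⁻ ω, ENNReal.ofReal (Real.exp (lam * inner ℝ x (ω : EuclideanSpace ℝ (Fin n)))) ∂μS)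
        ≤ ENNReal.ofReal ((C * Real.exp c * c ^ (-γ)) * S) := by
      calc (∫⁻ ω, ENNReal.ofReal (Real.exp (lam * inner ℝ x (ω : EuclideanSpace ℝ (Fin n)))) ∂μS)
          = ∫⁻ ω in univ, ENNReal.ofReal (Real.exp (lam * inner ℝ x (ω : EuclideanSpace ℝ (Fin n)))) ∂μS := by
            rw [setLIntegral_univ]
        _ ≤ ∫⁻ ω in ⋃ k, A k, ENNReal.ofReal (Real.exp (lam * inner ℝ x (ω : EuclideanSpace ℝ (Fin n)))) ∂μS :=
            lintegral_mono_set hcover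
        _ ≤ ∑' k : ℕ, ∫⁻ ω in A k, ENNReal.ofReal (Real.exp (lam * inner ℝ x (ω : EuclideanSpace ℝ (Fin n)))) ∂μS :=
            lintegral_iUnion_le _ _
        _ ≤ ∑' k : ℕ, ENNReal.ofReal (Real.exp (c - (k:ℝ))) * ENNReal.ofReal (C * (((k:ℝ)+1)/c) ^ γ) :=
            ENNReal.tsum_le_tsum hterm
        _ = ∑' k : ℕ, ENNReal.ofReal ((C * Real.exp c * c ^ (-γ)) * (Real.exp (-(k:ℝ)) * ((k:ℝ)+1) ^ γ)) := by
            congr 1; funext k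
            rw [← ENNReal.ofReal_mul (Real.exp_pos _).le, haeq k]
        _ = ENNReal.ofReal (∑' k : ℕ, (C * Real.exp c * c ^ (-γ)) * (Real.exp (-(k:ℝ)) * ((k:ℝ)+1) ^ γ)) := by
            rw [ENNReal.ofReal_tsum_of_nonneg (fun k => by positivity) (hS.mul_left _)]
        _ = ENNReal.ofReal ((C * Real.exp c * c ^ (-γ)) * S) := by rw [tsum_mul_left, hSdef]
    have hint : (∫ ω : sphere (0 : EuclideanSpace ℝ (Fin n)) 1,
          Real.exp (lam * inner ℝ x (ω : EuclideanSpace ℝ (Fin n))) ∂μS)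
        = (∫⁻ ω, ENNReal.ofReal (Real.exp (lam * inner ℝ x (ω : EuclideanSpace ℝ (Fin n)))) ∂μS).toReal := by
      rw [integral_eq_lintegral_of_nonneg_ae (ae_of_all _ (hfnonneg x))
        (hcont x).aestronglyMeasurable]
    rw [hint]
    have := ENNReal.toReal_le_of_le_ofReal (by positivity) hkey
    calc (∫⁻ ω, ENNReal.ofReal (Real.exp (lam * inner ℝ x (ω : EuclideanSpace ℝ (Fin n)))) ∂μS).toReal
        ≤ (C * Real.exp c * c ^ (-γ)) * S := this
      _ = C * S * (lam * ‖x‖) ^ (-γ) * Real.exp (lam * ‖x‖) := by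
          rw [hcdef, hrdef]; ring
  -- combine
  set K : ℝ := m * 2 ^ γ + (C * S * lam ^ (-γ)) * 2 ^ γ with hK
  have h2γpos : (0:ℝ) < 2 ^ γ := Real.rpow_pos_of_pos (by norm_num) _
  have hKpos : 0 < K := by
    rw [hK]
    have h1 : 0 < C * S * lam ^ (-γ) := by positivity
    nlinarith
  refine ⟨K, hKpos, ?_⟩
  intro x
  set r : ℝ := ‖x‖ with hrdef
  have hr0 : 0 ≤ r := norm_nonneg x
  have h1r : (0:ℝ) < 1 + r := by linarith
  have hbase : (0:ℝ) < (1+r) ^ (-γ) := Real.rpow_pos_of_pos h1r _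
  rcases lt_or_ge r 1 with hr1 | hr1
  · -- small x : crude bound
    refine (hcrude x).trans ?_
    have h2 : (2:ℝ) ^ (-γ) ≤ (1+r) ^ (-γ) :=
      Real.rpow_le_rpow_of_nonpos h1r (by linarith) (by linarith)
    have hm2 : m ≤ m * 2 ^ γ * (1+r) ^ (-γ) := by
      have : m * 2 ^ γ * (2:ℝ) ^ (-γ) ≤ m * 2 ^ γ * (1+r) ^ (-γ) :=
        mul_le_mul_of_nonneg_left h2 (by positivity)
      have heq : m * 2 ^ γ * (2:ℝ) ^ (-γ) = m := by
        rw [mul_assoc, ← Real.rpow_add (by norm_num)]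
        simp
      linarith
    have hKK : m * 2 ^ γ * (1+r) ^ (-γ) ≤ K * (1+r) ^ (-γ) := by
      apply mul_le_mul_of_nonneg_right _ hbase.le
      rw [hK]
      have : 0 < C * S * lam ^ (-γ) := by positivity
      nlinarith
    have : m ≤ K * (1+r) ^ (-γ) := hm2.trans hKK
    exact mul_le_mul_of_nonneg_right this (Real.exp_pos _).le
  · -- large x : sharp bound
    have hx : x ≠ 0 := by
      intro h
      rw [hrdef, h, norm_zero] at hr1
      linarith
    refine (hsharp x hx).trans ?_
    have hrpos : (0:ℝ) < r := by linarith
    have hml : (lam * r) ^ (-γ) = lam ^ (-γ) * r ^ (-γ) := Real.mul_rpow hlam.le hr0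
    have h2r : r ^ (-γ) ≤ 2 ^ γ * (1+r) ^ (-γ) := by
      have h1 : ((2:ℝ) * r) ^ (-γ) ≤ (1+r) ^ (-γ) :=
        Real.rpow_le_rpow_of_nonpos h1r (by linarith) (by linarith)
      have h2 : ((2:ℝ) * r) ^ (-γ) = 2 ^ (-γ) * r ^ (-γ) := Real.mul_rpow (by norm_num) hr0
      have h3 : (2:ℝ) ^ γ * ((2:ℝ) ^ (-γ) * r ^ (-γ)) = r ^ (-γ) := by
        rw [← mul_assoc, ← Real.rpow_add (by norm_num)]
        simp
      calc r ^ (-γ) = 2 ^ γ * ((2:ℝ)*r) ^ (-γ) := by rw [h2, h3]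
        _ ≤ 2 ^ γ * (1+r) ^ (-γ) := mul_le_mul_of_nonneg_left h1 h2γpos.le
    have hsc : C * S * (lam * r) ^ (-γ) ≤ K * (1+r) ^ (-γ) := by
      rw [hml]
      have step : C * S * (lam ^ (-γ) * r ^ (-γ)) ≤ C * S * lam ^ (-γ) * (2 ^ γ * (1+r) ^ (-γ)) := by
        have hh := mul_le_mul_of_nonneg_left h2r
          (mul_nonneg (mul_nonneg hC.le hSnonneg) (Real.rpow_nonneg hlam.le (-γ)))
        calc C * S * (lam ^ (-γ) * r ^ (-γ)) = (C * S * lam ^ (-γ)) * r ^ (-γ) := by ring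
          _ ≤ (C * S * lam ^ (-γ)) * (2 ^ γ * (1+r) ^ (-γ)) := hh
      refine step.trans ?_
      have hK2 : C * S * lam ^ (-γ) * 2 ^ γ ≤ K := by
        rw [hK]
        nlinarith [mul_nonneg hmnonneg h2γpos.le]
      calc C * S * lam ^ (-γ) * (2 ^ γ * (1+r) ^ (-γ))
          = (C * S * lam ^ (-γ) * 2 ^ γ) * (1+r) ^ (-γ) := by ring
        _ ≤ K * (1+r) ^ (-γ) := mul_le_mul_of_nonneg_right hK2 hbase.le
    exact mul_le_mul_of_nonneg_right hsc (Real.exp_pos _).le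

lemma poly_le_exp (a : ℝ) (ha : 0 < a) (m : ℕ) (hm : 1 ≤ m) (ρ : ℝ) (hρ : 0 ≤ ρ) :
    ρ ^ m ≤ ((m:ℝ)/a) ^ m * Real.exp (a * ρ) := by
  have hm0 : (0:ℝ) < m := by exact_mod_cast hm
  have h1 : a * ρ / m ≤ Real.exp (a * ρ / m) := by
    have := Real.add_one_le_exp (a * ρ / m)
    have h0 : 0 ≤ a * ρ / m := by positivity
    linarith
  have h2 : (a * ρ / m) ^ m ≤ (Real.exp (a * ρ / m)) ^ m :=
    pow_le_pow_left₀ (by positivity) h1 m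
  have h3 : (Real.exp (a * ρ / m)) ^ m = Real.exp (a * ρ) := by
    rw [← Real.exp_nat_mul]
    congr 1
    field_simp
  calc ρ ^ m = ((m:ℝ)/a) ^ m * (a * ρ / m) ^ m := by
        rw [← mul_pow]
        congr 1
        field_simp
    _ ≤ ((m:ℝ)/a) ^ m * Real.exp (a * ρ) := by
        apply mul_le_mul_of_nonneg_left _ (by positivity)
        calc (a * ρ / m) ^ m ≤ (Real.exp (a * ρ / m)) ^ m := h2
          _ = Real.exp (a * ρ) := h3

set_option maxHeartbeats 2000000 in
theorem stmt_10 (n : ℕ) (hn : 1 ≤ n) (lam p : ℝ) (hlam : 0 < lam) (hp : 1 < p)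
    (p' : ℝ) (hp' : p' = p / (p - 1)) :
    ∃ C : ℝ, 0 < C ∧
      ∀ ρ : ℝ, 1 ≤ ρ →
        (∫ x in Metric.ball (0 : EuclideanSpace ℝ (Fin n)) ρ,
            (∫ ω : Metric.sphere (0 : EuclideanSpace ℝ (Fin n)) 1,
                Real.exp (lam * inner ℝ x (ω : EuclideanSpace ℝ (Fin n)))
              ∂((volume : Measure (EuclideanSpace ℝ (Fin n))).toSphere)) ^ p')
        ≤ C * ρ ^ ((n : ℝ) - 1 - ((n : ℝ) - 1) * p' / 2) * Real.exp (p' * lam * ρ) := by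
  classical
  have hp'pos : 0 < p' := by rw [hp']; exact div_pos (by linarith) (by linarith)
  obtain ⟨K, hKpos, hpt⟩ := pointwise_bound n hn lam hlam
  have hn0 : (0:ℝ) < n := by exact_mod_cast hn
  have hn1 : (1:ℝ) ≤ n := by exact_mod_cast hn
  set γ : ℝ := ((n:ℝ)-1)/2 with hγdef
  have hγ : 0 ≤ γ := by rw [hγdef]; linarith
  set β : ℝ := γ * p' with hβdef
  have hβ : 0 ≤ β := mul_nonneg hγ hp'pos.le
  set μ₀ : ℝ := p' * lam with hμ₀def
  have hμ₀ : 0 < μ₀ := mul_pos hp'pos hlam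
  set K' : ℝ := K ^ p' with hK'def
  have hK' : 0 < K' := Real.rpow_pos_of_pos hKpos _
  haveI hnontriv : Nontrivial (EuclideanSpace ℝ (Fin n)) :=
    Module.nontrivial_of_finrank_pos (R := ℝ) (by rw [finrank_euclideanSpace_fin]; omega)
  set V : ℝ := ((volume : Measure (EuclideanSpace ℝ (Fin n))) (Metric.ball 0 1)).toReal with hVdef
  have hV : 0 < V := by
    rw [hVdef]
    exact ENNReal.toReal_pos (measure_ball_pos _ _ one_pos).ne' measure_ball_lt_top.ne
  set m₁ : ℕ := 1 + ⌈β⌉₊ with hm₁def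
  have hm₁ : (1:ℝ) + β ≤ m₁ := by
    rw [hm₁def]
    push_cast
    linarith [Nat.le_ceil β]
  set c₃ : ℝ := ((m₁:ℝ)/(μ₀/2)) ^ m₁ with hc₃def
  have hm₁0 : (0:ℝ) < m₁ := by
    rw [hm₁def]; push_cast; positivity
  have hc₃ : 0 < c₃ := by rw [hc₃def]; positivity
  set h : ℝ → ℝ := fun r => K' * (1+r) ^ (-β) * Real.exp (μ₀ * r) with hhdef
  -- pointwise bound with power p'
  have hpt' : ∀ x : EuclideanSpace ℝ (Fin n),
      (∫ ω : sphere (0 : EuclideanSpace ℝ (Fin n)) 1,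
          Real.exp (lam * inner ℝ x (ω : EuclideanSpace ℝ (Fin n)))
        ∂((volume : Measure (EuclideanSpace ℝ (Fin n))).toSphere)) ^ p' ≤ h ‖x‖ := by
    intro x
    have h0 : 0 ≤ ∫ ω : sphere (0 : EuclideanSpace ℝ (Fin n)) 1,
        Real.exp (lam * inner ℝ x (ω : EuclideanSpace ℝ (Fin n)))
        ∂((volume : Measure (EuclideanSpace ℝ (Fin n))).toSphere) :=
      integral_nonneg (fun ω => (Real.exp_pos _).le)
    have h1r : (0:ℝ) < 1 + ‖x‖ := by positivity
    have h2 := Real.rpow_le_rpow h0 (hpt x) hp'pos.le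
    refine h2.trans_eq ?_
    rw [hhdef]
    simp only
    rw [Real.mul_rpow (by positivity) (Real.exp_pos _).le,
        Real.mul_rpow hKpos.le (by positivity)]
    rw [← Real.rpow_mul h1r.le, ← Real.exp_mul]
    rw [hβdef, hγdef]
    ring_nf
    rw [hK'def, hμ₀def]
    ring_nf
  have hconth : Continuous fun x : EuclideanSpace ℝ (Fin n) => h ‖x‖ := by
    rw [hhdef]
    have hb : Continuous fun x : EuclideanSpace ℝ (Fin n) => (1 + ‖x‖) ^ (-β) := by
      apply Continuous.rpow_const (continuous_const.add continuous_norm)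
      intro x
      left
      exact (by positivity : (0:ℝ) < 1 + ‖x‖).ne'
    exact (continuous_const.mul hb).mul
      (Real.continuous_exp.comp (continuous_const.mul continuous_norm))
  have hCpos : 0 < (n:ℝ) * V * (K' * c₃ + K' * 2 ^ β * μ₀⁻¹) :=
    mul_pos (mul_pos hn0 hV) (add_pos (mul_pos hK' hc₃)
      (mul_pos (mul_pos hK' (Real.rpow_pos_of_pos two_pos β)) (inv_pos.2 hμ₀)))
  refine ⟨(n:ℝ) * V * (K' * c₃ + K' * 2 ^ β * μ₀⁻¹), hCpos, ?_⟩
  intro ρ hρ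
  have hρ0 : (0:ℝ) < ρ := lt_of_lt_of_le one_pos hρ
  have hint_h : IntegrableOn (fun x : EuclideanSpace ℝ (Fin n) => h ‖x‖)
      (Metric.ball 0 ρ) volume :=
    (hconth.continuousOn.integrableOn_compact (isCompact_closedBall (0 : EuclideanSpace ℝ (Fin n)) ρ)).mono_set
      Metric.ball_subset_closedBall
  have step1 : (∫ x in Metric.ball (0 : EuclideanSpace ℝ (Fin n)) ρ,
      (∫ ω : Metric.sphere (0 : EuclideanSpace ℝ (Fin n)) 1,
          Real.exp (lam * inner ℝ x (ω : EuclideanSpace ℝ (Fin n)))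
        ∂((volume : Measure (EuclideanSpace ℝ (Fin n))).toSphere)) ^ p')
      ≤ ∫ x in Metric.ball (0 : EuclideanSpace ℝ (Fin n)) ρ, h ‖x‖ := by
    apply integral_mono_of_nonneg
    · exact ae_of_all _ (fun x => Real.rpow_nonneg (integral_nonneg fun ω => (Real.exp_pos _).le) _)
    · exact hint_h
    · exact ae_of_all _ (fun x => hpt' x)
  have step2 : (∫ x in Metric.ball (0 : EuclideanSpace ℝ (Fin n)) ρ, h ‖x‖)
      = (n:ℝ) * (V * ∫ y in Ioi (0:ℝ), y ^ (n-1) • (Set.indicator (Iio ρ) h) y) := by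
    have e1 : (∫ x in Metric.ball (0 : EuclideanSpace ℝ (Fin n)) ρ, h ‖x‖)
        = ∫ x : EuclideanSpace ℝ (Fin n), (Set.indicator (Iio ρ) h) ‖x‖ := by
      rw [← integral_indicator measurableSet_ball]
      congr 1
      funext x
      by_cases hx : ‖x‖ < ρ
      · rw [Set.indicator_of_mem (mem_ball_zero_iff.2 hx),
          Set.indicator_of_mem (by exact hx : ‖x‖ ∈ Iio ρ)]
      · rw [Set.indicator_of_notMem (fun hmem => hx (mem_ball_zero_iff.1 hmem)),
          Set.indicator_of_notMem (by exact hx : ¬ ‖x‖ ∈ Iio ρ)]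
    rw [e1, integral_fun_norm_addHaar (volume : Measure (EuclideanSpace ℝ (Fin n)))
      (Set.indicator (Iio ρ) h), finrank_euclideanSpace_fin]
    rw [nsmul_eq_mul, smul_eq_mul]
    rfl
  set g : ℝ → ℝ := fun y => y ^ (n-1) * h y with hgdef
  have e2 : (∫ y in Ioi (0:ℝ), y ^ (n-1) • (Set.indicator (Iio ρ) h) y)
      = ∫ y in Ioo (0:ℝ) ρ, g y := by
    have hind : ∀ y : ℝ, y ^ (n-1) • (Set.indicator (Iio ρ) h) y = (Set.indicator (Iio ρ) g) y := by
      intro y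
      rw [smul_eq_mul]
      by_cases hy : y ∈ Iio ρ
      · rw [Set.indicator_of_mem hy, Set.indicator_of_mem hy]
      · rw [Set.indicator_of_notMem hy, Set.indicator_of_notMem hy, mul_zero]
    simp_rw [hind]
    rw [setIntegral_indicator measurableSet_Iio, Ioi_inter_Iio]
  -- continuity / integrability of g
  have hgcont : ContinuousOn g (Icc (0:ℝ) ρ) := by
    rw [hgdef, hhdef]
    apply ContinuousOn.mul (continuousOn_pow (n-1))
    apply ContinuousOn.mul
    · apply ContinuousOn.mul continuousOn_const
      apply ContinuousOn.rpow_const (continuousOn_const.add continuousOn_id)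
      intro y hy
      left
      have : (0:ℝ) ≤ y := hy.1
      exact (by positivity : (0:ℝ) < 1 + y).ne'
    · exact (Real.continuous_exp.comp (continuous_const.mul continuous_id)).continuousOn
  have hgint : IntegrableOn g (Icc (0:ℝ) ρ) volume := hgcont.integrableOn_compact isCompact_Icc
  have hsub1 : Ioo (0:ℝ) (ρ/2) ⊆ Icc (0:ℝ) ρ := fun y hy => ⟨hy.1.le, by linarith [hy.2]⟩
  have hsub2 : Ico (ρ/2) ρ ⊆ Icc (0:ℝ) ρ := fun y hy => ⟨by linarith [hy.1], hy.2.le⟩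
  have hint1 : IntegrableOn g (Ioo (0:ℝ) (ρ/2)) volume := hgint.mono_set hsub1
  have hint2 : IntegrableOn g (Ico (ρ/2) ρ) volume := hgint.mono_set hsub2
  have hsplit : Ioo (0:ℝ) ρ = Ioo 0 (ρ/2) ∪ Ico (ρ/2) ρ := by
    ext y
    simp only [mem_Ioo, mem_union, mem_Ico]
    constructor
    · rintro ⟨h1, h2⟩
      rcases lt_or_ge y (ρ/2) with h3 | h3
      · exact Or.inl ⟨h1, h3⟩
      · exact Or.inr ⟨h3, h2⟩
    · rintro (⟨h1, h2⟩ | ⟨h1, h2⟩)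
      · exact ⟨h1, by linarith⟩
      · exact ⟨by linarith, h2⟩
  have hdisj : Disjoint (Ioo (0:ℝ) (ρ/2)) (Ico (ρ/2) ρ) := by
    apply Set.disjoint_left.2
    rintro y ⟨_, h2⟩ ⟨h3, _⟩
    linarith
  have esplit : ∫ y in Ioo (0:ℝ) ρ, g y
      = (∫ y in Ioo (0:ℝ) (ρ/2), g y) + ∫ y in Ico (ρ/2) ρ, g y := by
    rw [hsplit, setIntegral_union hdisj measurableSet_Ico hint1 hint2]
  have hgnn : ∀ y : ℝ, 0 ≤ y → 0 ≤ g y := by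
    intro y hy
    rw [hgdef, hhdef]
    have h1 : (0:ℝ) ≤ (1+y) ^ (-β) := Real.rpow_nonneg (by linarith) _
    exact mul_nonneg (pow_nonneg hy _)
      (mul_nonneg (mul_nonneg hK'.le h1) (Real.exp_pos _).le)
  -- piece 1
  have hpiece1 : (∫ y in Ioo (0:ℝ) (ρ/2), g y)
      ≤ (ρ/2) * (ρ^(n-1) * K' * Real.exp (μ₀ * (ρ/2))) := by
    have hb : ∀ y ∈ Ioo (0:ℝ) (ρ/2), g y ≤ ρ^(n-1) * K' * Real.exp (μ₀ * (ρ/2)) := by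
      rintro y ⟨hy0, hy2⟩
      rw [hgdef, hhdef]
      simp only
      have h1 : y ^ (n-1) ≤ ρ ^ (n-1) := pow_le_pow_left₀ hy0.le (by linarith) _
      have h2 : (1+y) ^ (-β) ≤ 1 :=
        Real.rpow_le_one_of_one_le_of_nonpos (by linarith) (by linarith)
      have h3 : Real.exp (μ₀ * y) ≤ Real.exp (μ₀ * (ρ/2)) :=
        Real.exp_le_exp.2 (mul_le_mul_of_nonneg_left hy2.le hμ₀.le)
      calc y ^ (n-1) * (K' * (1+y) ^ (-β) * Real.exp (μ₀ * y))
          ≤ y ^ (n-1) * (K' * 1 * Real.exp (μ₀ * (ρ/2))) := by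
            apply mul_le_mul_of_nonneg_left _ (pow_nonneg hy0.le _)
            apply mul_le_mul (mul_le_mul_of_nonneg_left h2 hK'.le) h3 (Real.exp_pos _).le
              (by nlinarith [hK'])
        _ ≤ ρ ^ (n-1) * (K' * 1 * Real.exp (μ₀ * (ρ/2))) := by
            apply mul_le_mul_of_nonneg_right h1
            positivity
        _ = ρ^(n-1) * K' * Real.exp (μ₀ * (ρ/2)) := by ring
    have hci : IntegrableOn (fun _ : ℝ => ρ^(n-1) * K' * Real.exp (μ₀ * (ρ/2)))
        (Ioo (0:ℝ) (ρ/2)) volume :=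
      integrableOn_const measure_Ioo_lt_top.ne
    have := integral_mono_of_nonneg (μ := volume.restrict (Ioo (0:ℝ) (ρ/2)))
      (f := g) (g := fun _ => ρ^(n-1) * K' * Real.exp (μ₀ * (ρ/2)))
      (by
        filter_upwards [ae_restrict_mem measurableSet_Ioo] with y hy
        exact hgnn y hy.1.le)
      hci
      (by
        filter_upwards [ae_restrict_mem measurableSet_Ioo] with y hy
        exact hb y hy)
    calc (∫ y in Ioo (0:ℝ) (ρ/2), g y)
        ≤ ∫ _ in Ioo (0:ℝ) (ρ/2), ρ^(n-1) * K' * Real.exp (μ₀ * (ρ/2)) := this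
      _ = (ρ/2) * (ρ^(n-1) * K' * Real.exp (μ₀ * (ρ/2))) := by
          rw [setIntegral_const, measureReal_def, Real.volume_Ioo, smul_eq_mul]
          congr 1
          rw [ENNReal.toReal_ofReal (by linarith)]
          ring
  -- piece 2
  have hpiece2 : (∫ y in Ico (ρ/2) ρ, g y)
      ≤ (ρ^(n-1) * K' * ((ρ/2) ^ (-β))) * (μ₀⁻¹ * Real.exp (μ₀ * ρ)) := by
    have hb : ∀ y ∈ Ico (ρ/2) ρ, g y
        ≤ (ρ^(n-1) * K' * ((ρ/2) ^ (-β))) * Real.exp (μ₀ * y) := by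
      rintro y ⟨hy1, hy2⟩
      have hy0 : (0:ℝ) ≤ y := by linarith
      rw [hgdef, hhdef]
      simp only
      have h1 : y ^ (n-1) ≤ ρ ^ (n-1) := pow_le_pow_left₀ hy0 hy2.le _
      have h2 : (1+y) ^ (-β) ≤ (ρ/2) ^ (-β) :=
        Real.rpow_le_rpow_of_nonpos (by linarith) (by linarith) (by linarith)
      have hprod : y ^ (n-1) * (1+y) ^ (-β) ≤ ρ^(n-1) * (ρ/2) ^ (-β) :=
        mul_le_mul h1 h2 (Real.rpow_nonneg (by linarith) _) (pow_nonneg hρ0.le _)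
      calc y ^ (n-1) * (K' * (1+y) ^ (-β) * Real.exp (μ₀ * y))
          = (y ^ (n-1) * (1+y) ^ (-β)) * (K' * Real.exp (μ₀ * y)) := by ring
        _ ≤ (ρ^(n-1) * (ρ/2) ^ (-β)) * (K' * Real.exp (μ₀ * y)) :=
            mul_le_mul_of_nonneg_right hprod (by positivity)
        _ = (ρ^(n-1) * K' * ((ρ/2) ^ (-β))) * Real.exp (μ₀ * y) := by ring
    have hci : IntegrableOn (fun y : ℝ => (ρ^(n-1) * K' * ((ρ/2) ^ (-β))) * Real.exp (μ₀ * y))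
        (Ico (ρ/2) ρ) volume := by
      apply IntegrableOn.mono_set _ Ico_subset_Icc_self
      exact (continuous_const.mul
        (Real.continuous_exp.comp (continuous_const.mul continuous_id))).continuousOn.integrableOn_compact isCompact_Icc
    have hmono := integral_mono_of_nonneg (μ := volume.restrict (Ico (ρ/2) ρ))
      (f := g) (g := fun y => (ρ^(n-1) * K' * ((ρ/2) ^ (-β))) * Real.exp (μ₀ * y))
      (by
        filter_upwards [ae_restrict_mem measurableSet_Ico] with y hy
        exact hgnn y (by linarith [hy.1]))
      hci
      (by
        filter_upwards [ae_restrict_mem measurableSet_Ico] with y hy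
        exact hb y hy)
    have hexpint : (∫ y in Ico (ρ/2) ρ, Real.exp (μ₀ * y))
        = μ₀⁻¹ * (Real.exp (μ₀ * ρ) - Real.exp (μ₀ * (ρ/2))) := by
      rw [Measure.restrict_congr_set Ico_ae_eq_Ioc,
        ← intervalIntegral.integral_of_le (by linarith : ρ/2 ≤ ρ)]
      rw [intervalIntegral.integral_comp_mul_left (fun u => Real.exp u) hμ₀.ne']
      rw [integral_exp, smul_eq_mul]
    calc (∫ y in Ico (ρ/2) ρ, g y)
        ≤ ∫ y in Ico (ρ/2) ρ, (ρ^(n-1) * K' * ((ρ/2) ^ (-β))) * Real.exp (μ₀ * y) := hmono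
      _ = (ρ^(n-1) * K' * ((ρ/2) ^ (-β))) * ∫ y in Ico (ρ/2) ρ, Real.exp (μ₀ * y) := by
          rw [integral_const_mul]
      _ = (ρ^(n-1) * K' * ((ρ/2) ^ (-β))) * (μ₀⁻¹ * (Real.exp (μ₀ * ρ) - Real.exp (μ₀ * (ρ/2)))) := by
          rw [hexpint]
      _ ≤ (ρ^(n-1) * K' * ((ρ/2) ^ (-β))) * (μ₀⁻¹ * Real.exp (μ₀ * ρ)) := by
          apply mul_le_mul_of_nonneg_left _ (by positivity)
          apply mul_le_mul_of_nonneg_left _ (inv_pos.2 hμ₀).le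
          linarith [Real.exp_pos (μ₀ * (ρ/2))]
  -- combine 1D bounds
  set α : ℝ := (n:ℝ) - 1 - β with hαdef
  have hρα : (0:ℝ) < ρ ^ α := Real.rpow_pos_of_pos hρ0 _
  have hrpow_nat : (ρ:ℝ) ^ (n-1 : ℕ) = ρ ^ ((n:ℝ) - 1) := by
    rw [← Real.rpow_natCast ρ (n-1), Nat.cast_sub hn, Nat.cast_one]
  have hT1 : (ρ/2) * (ρ^(n-1) * K' * Real.exp (μ₀ * (ρ/2)))
      ≤ K' * c₃ * (ρ ^ α * Real.exp (μ₀ * ρ)) := by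
    have hρn : (ρ/2) * ρ^(n-1 : ℕ) ≤ ρ ^ ((n:ℝ)) := by
      rw [Real.rpow_natCast ρ n]
      have : (ρ/2) * ρ^(n-1:ℕ) ≤ ρ * ρ^(n-1:ℕ) :=
        mul_le_mul_of_nonneg_right (by linarith) (pow_nonneg hρ0.le _)
      refine this.trans_eq ?_
      rw [← pow_succ']
      congr 1
      omega
    have hkey : ρ ^ ((n:ℝ)) ≤ c₃ * ρ ^ α * Real.exp ((μ₀/2) * ρ) := by
      have e3 : ρ ^ ((n:ℝ)) = ρ ^ α * ρ ^ ((1:ℝ)+β) := by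
        rw [← Real.rpow_add hρ0]
        congr 1
        rw [hαdef]; ring
      have h4 : ρ ^ ((1:ℝ)+β) ≤ ρ ^ ((m₁:ℕ) : ℝ) :=
        Real.rpow_le_rpow_of_exponent_le hρ (by exact_mod_cast hm₁)
      have h5 : ρ ^ ((m₁:ℕ) : ℝ) = ρ ^ (m₁:ℕ) := Real.rpow_natCast _ _
      have h6 : ρ ^ (m₁:ℕ) ≤ c₃ * Real.exp ((μ₀/2) * ρ) := by
        rw [hc₃def]
        exact poly_le_exp (μ₀/2) (by linarith) m₁ (by rw [hm₁def]; omega) ρ hρ0.le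
      calc ρ ^ ((n:ℝ)) = ρ ^ α * ρ ^ ((1:ℝ)+β) := e3
        _ ≤ ρ ^ α * (c₃ * Real.exp ((μ₀/2) * ρ)) := by
            apply mul_le_mul_of_nonneg_left _ hρα.le
            rw [h5] at h4
            exact h4.trans h6
        _ = c₃ * ρ ^ α * Real.exp ((μ₀/2) * ρ) := by ring
    have hexpsplit : Real.exp ((μ₀/2) * ρ) * Real.exp (μ₀ * (ρ/2)) = Real.exp (μ₀ * ρ) := by
      rw [← Real.exp_add]
      congr 1
      ring
    calc (ρ/2) * (ρ^(n-1) * K' * Real.exp (μ₀ * (ρ/2)))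
        = ((ρ/2) * ρ^(n-1)) * K' * Real.exp (μ₀ * (ρ/2)) := by ring
      _ ≤ (c₃ * ρ ^ α * Real.exp ((μ₀/2) * ρ)) * K' * Real.exp (μ₀ * (ρ/2)) := by
          apply mul_le_mul_of_nonneg_right _ (Real.exp_pos _).le
          exact mul_le_mul_of_nonneg_right (hρn.trans hkey) hK'.le
      _ = K' * c₃ * (ρ ^ α * (Real.exp ((μ₀/2) * ρ) * Real.exp (μ₀ * (ρ/2)))) := by ring
      _ = K' * c₃ * (ρ ^ α * Real.exp (μ₀ * ρ)) := by rw [hexpsplit]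
  have hT2 : (ρ^(n-1) * K' * ((ρ/2) ^ (-β))) * (μ₀⁻¹ * Real.exp (μ₀ * ρ))
      = K' * 2 ^ β * μ₀⁻¹ * (ρ ^ α * Real.exp (μ₀ * ρ)) := by
    have e4 : (ρ/2 : ℝ) ^ (-β) = 2 ^ β * ρ ^ (-β) := by
      rw [Real.div_rpow hρ0.le (by norm_num), Real.rpow_neg (by norm_num : (0:ℝ) ≤ 2),
        div_eq_mul_inv, inv_inv, mul_comm]
    have e5 : ρ ^ ((n:ℝ)-1) * ρ ^ (-β) = ρ ^ α := by
      rw [← Real.rpow_add hρ0]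
      have : (n:ℝ) - 1 + -β = α := by rw [hαdef]; ring
      rw [this]
    rw [e4, hrpow_nat]
    rw [← e5]
    ring
  -- final chain
  refine (step1.trans_eq step2).trans ?_
  rw [e2, esplit]
  have hfinal : (∫ y in Ioo (0:ℝ) (ρ/2), g y) + (∫ y in Ico (ρ/2) ρ, g y)
      ≤ (K' * c₃ + K' * 2 ^ β * μ₀⁻¹) * (ρ ^ α * Real.exp (μ₀ * ρ)) := by
    have := add_le_add (hpiece1.trans hT1) (hpiece2.trans_eq hT2)
    calc (∫ y in Ioo (0:ℝ) (ρ/2), g y) + (∫ y in Ico (ρ/2) ρ, g y)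
        ≤ K' * c₃ * (ρ ^ α * Real.exp (μ₀ * ρ)) + K' * 2 ^ β * μ₀⁻¹ * (ρ ^ α * Real.exp (μ₀ * ρ)) := this
      _ = (K' * c₃ + K' * 2 ^ β * μ₀⁻¹) * (ρ ^ α * Real.exp (μ₀ * ρ)) := by ring
  have hgoalexp : (n:ℝ) - 1 - ((n:ℝ)-1) * p' / 2 = α := by
    rw [hαdef, hβdef, hγdef]; ring
  rw [hgoalexp]
  calc (n:ℝ) * (V * ((∫ y in Ioo (0:ℝ) (ρ/2), g y) + ∫ y in Ico (ρ/2) ρ, g y))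
      ≤ (n:ℝ) * (V * ((K' * c₃ + K' * 2 ^ β * μ₀⁻¹) * (ρ ^ α * Real.exp (μ₀ * ρ)))) := by
        apply mul_le_mul_of_nonneg_left _ hn0.le
        exact mul_le_mul_of_nonneg_left hfinal hV.le
    _ = (n:ℝ) * V * (K' * c₃ + K' * 2 ^ β * μ₀⁻¹) * ρ ^ α * Real.exp (μ₀ * ρ) := by ring
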